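/- Let H be a group with a central element z of order exactly 2 such that every commutator ⁅g,h⁆ = g h g⁻¹ h⁻¹ (for g, h ∈ H) lies in {1, z}, and assume the center Z(H) has finite index in H, so that [H : Z(H)] = n² for a positive integer n. Let χ : Z(H) → ℂˣ be a character with χ(z) = −1, and let π(χ) be the (unique up to isomorphism) finite-dimensional irreducible complex representation of H whose restriction to Z(H) is a multiple of χ. Then dim π(χ) = n, and the induced representation Ind_{Z(H)}^{H} χ is isomorphic to the direct sum of n copies of π(χ). -/

import Mathlib

/-- A finite-dimensional complex representation of a group `H`. -/
structure FinDimRep (H : Type) [Group H] where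
  carrier : Type
  [acg : AddCommGroup carrier]
  [mod : Module ℂ carrier]
  [fd : FiniteDimensional ℂ carrier]
  ρ : Representation ℂ H carrier

attribute [instance] FinDimRep.acg FinDimRep.mod FinDimRep.fd

variable {H : Type} [Group H]

/-- Irreducibility: the space is nonzero and has no proper nonzero invariant subspace. -/
def FinDimRep.IsIrreducible (π : FinDimRep H) : Prop :=
  (⊤ : Submodule ℂ π.carrier) ≠ ⊥ ∧
  ∀ U : Submodule ℂ π.carrier, (∀ g : H, ∀ x ∈ U, π.ρ g x ∈ U) → U = ⊥ ∨ U = ⊤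

/-- The restriction of `π` to the center is a multiple of the character `χ`. -/
def FinDimRep.RestrictsTo (π : FinDimRep H) (χ : Subgroup.center H →* ℂˣ) : Prop :=
  ∀ s : Subgroup.center H,
    π.ρ (s : H) = (χ s : ℂ) • (1 : π.carrier →ₗ[ℂ] π.carrier)

/-- Isomorphism of two representations of `H` on complex vector spaces. -/
def RepIso {W W' : Type} [AddCommGroup W] [Module ℂ W] [AddCommGroup W'] [Module ℂ W']
    (ρ : Representation ℂ H W) (ρ' : Representation ℂ H W') : Prop :=
  ∃ e : W ≃ₗ[ℂ] W', ∀ (g : H) (x : W), e (ρ g x) = ρ' g (e x)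

/-- The space of the representation of `H` induced from the character `χ` of the
center: functions `f : H → ℂ` with `f(sh) = χ(s)f(h)` for `s ∈ Z(H)`. -/
noncomputable def indSpace (H : Type) [Group H] (χ : Subgroup.center H →* ℂˣ) :
    Submodule ℂ (H → ℂ) where
  carrier := {f | ∀ (s : Subgroup.center H) (h : H), f ((s : H) * h) = (χ s : ℂ) * f h}
  add_mem' := by
    intro a b ha hb s h
    simp only [Pi.add_apply, ha s h, hb s h, mul_add]
  zero_mem' := by
    intro s h
    simp
  smul_mem' := by
    intro t f hf s h
    simp only [Pi.smul_apply, hf s h, smul_eq_mul]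
    ring

/-- The induced representation `Ind_{Z(H)}^{H} χ`, by right translation. -/
noncomputable def indRep (H : Type) [Group H] (χ : Subgroup.center H →* ℂˣ) :
    Representation ℂ H (indSpace H χ) where
  toFun g :=
    { toFun := fun f => ⟨fun h => (f : H → ℂ) (h * g), by
        intro s h
        simpa [mul_assoc] using f.2 s (h * g)⟩
      map_add' := by
        intro a b
        apply Subtype.ext
        funext h
        rfl
      map_smul' := by
        intro t a
        apply Subtype.ext
        funext h
        rfl }
  map_one' := by
    apply LinearMap.ext
    intro f
    apply Subtype.ext
    funext h
    simp
  map_mul' := by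
    intro g g'
    apply LinearMap.ext
    intro f
    apply Subtype.ext
    funext h
    simp [mul_assoc]

/-- The direct sum of `n` copies of a representation. -/
noncomputable def copiesRep (H : Type) [Group H] (n : ℕ) {W : Type} [AddCommGroup W] [Module ℂ W]
    (ρ : Representation ℂ H W) : Representation ℂ H (Fin n → W) where
  toFun g :=
    { toFun := fun v i => ρ g (v i)
      map_add' := by
        intro a b
        funext i
        simp
      map_smul' := by
        intro t a
        funext i
        simp }
  map_one' := by
    apply LinearMap.ext
    intro v
    funext i
    simp
  map_mul' := by
    intro g g'
    apply LinearMap.ext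
    intro v
    funext i
    simp

open scoped commutatorElement

section Lemma51Aux

open LinearMap

variable {H : Type} [Group H]

theorem l51_rho_central_mul' (χ : Subgroup.center H →* ℂˣ) (π : FinDimRep H)
    (hres : π.RestrictsTo χ) (s : Subgroup.center H) (g : H) :
    π.ρ ((s : H) * g) = (χ s : ℂ) • π.ρ g := by
  rw [map_mul, hres s, smul_mul_assoc, one_mul]

/-- The matrix-coefficient map `S ↦ (h ↦ tr (π h * S))` into the induced space. -/
noncomputable def l51phi (χ : Subgroup.center H →* ℂˣ) (π : FinDimRep H)
    (hres : π.RestrictsTo χ) :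
    (π.carrier →ₗ[ℂ] π.carrier) →ₗ[ℂ] indSpace H χ where
  toFun S := ⟨fun h => trace ℂ π.carrier (π.ρ h * S), by
    intro s h
    show trace ℂ π.carrier (π.ρ ((s : H) * h) * S) = (χ s : ℂ) * trace ℂ π.carrier (π.ρ h * S)
    rw [l51_rho_central_mul' χ π hres s h, smul_mul_assoc, map_smul, smul_eq_mul]⟩
  map_add' S T := by
    apply Subtype.ext
    funext h
    simp [mul_add]
  map_smul' c S := by
    apply Subtype.ext
    funext h
    simp [mul_smul_comm]

/-- The "Fourier transform back": `f ↦ ∑_{c ∈ H/Z} f((out c)⁻¹) • π(out c)`. -/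
noncomputable def l51psi (χ : Subgroup.center H →* ℂˣ) (π : FinDimRep H)
    [Fintype (H ⧸ Subgroup.center H)] :
    indSpace H χ →ₗ[ℂ] (π.carrier →ₗ[ℂ] π.carrier) where
  toFun f := ∑ c : H ⧸ Subgroup.center H,
    (f : H → ℂ) (Quotient.out c)⁻¹ • π.ρ (Quotient.out c)
  map_add' f g := by
    rw [← Finset.sum_add_distrib]
    refine Finset.sum_congr rfl fun c _ => ?_
    simp [add_smul]
  map_smul' c f := by
    rw [RingHom.id_apply, Finset.smul_sum]
    refine Finset.sum_congr rfl fun q _ => ?_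
    simp [smul_smul]

variable (χ : Subgroup.center H →* ℂˣ) (π : FinDimRep H)

theorem l51_rho_central_mul (hres : π.RestrictsTo χ) (s : Subgroup.center H) (g : H) :
    π.ρ ((s : H) * g) = (χ s : ℂ) • π.ρ g := by
  rw [map_mul, hres s, smul_mul_assoc, one_mul]

theorem l51_rho_inv_mul (g : H) : π.ρ g⁻¹ * π.ρ g = 1 := by
  rw [← map_mul, inv_mul_cancel, map_one]

theorem l51_trace_conj (T : π.carrier →ₗ[ℂ] π.carrier) (g : H) :
    trace ℂ π.carrier (π.ρ g * T * π.ρ g⁻¹) = trace ℂ π.carrier T := by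
  rw [trace_mul_comm, ← mul_assoc, l51_rho_inv_mul, one_mul]

theorem l51_units_cancel (s : Subgroup.center H) : (χ s⁻¹ : ℂ) * (χ s : ℂ) = 1 := by
  rw [← Units.val_mul, ← map_mul, inv_mul_cancel, map_one, Units.val_one]

theorem l51_units_cancel' (s : Subgroup.center H) : (χ s : ℂ) * (χ s⁻¹ : ℂ) = 1 := by
  rw [← Units.val_mul, ← map_mul, mul_inv_cancel, map_one, Units.val_one]

/-- Conjugation `π g * T * π g⁻¹` only depends on the coset of `g` mod the center. -/
theorem l51_conj_coset (hres : π.RestrictsTo χ) (T : π.carrier →ₗ[ℂ] π.carrier) {a b : H}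
    (hab : (a : H ⧸ Subgroup.center H) = b) :
    π.ρ a * T * π.ρ a⁻¹ = π.ρ b * T * π.ρ b⁻¹ := by
  obtain hs : a⁻¹ * b ∈ Subgroup.center H := QuotientGroup.eq.mp hab
  set s : Subgroup.center H := ⟨a⁻¹ * b, hs⟩ with hsdef
  have hb : b = (s : H) * a := by
    have hc := Subgroup.mem_center_iff.mp hs a
    show b = (a⁻¹ * b) * a
    rw [← hc]
    group
  have hbi : b⁻¹ = ((s⁻¹ : Subgroup.center H) : H) * a⁻¹ := by
    show b⁻¹ = (a⁻¹ * b)⁻¹ * a⁻¹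
    group
  rw [hbi, hb, l51_rho_central_mul χ π hres s a, l51_rho_central_mul χ π hres s⁻¹ a⁻¹]
  rw [smul_mul_assoc, smul_mul_assoc, mul_smul_comm, smul_smul, l51_units_cancel', one_smul]

/-- Schur averaging: the average of conjugates of `T` over `H / Z` is a scalar `μ`
with `μ · dim V = |H/Z| · tr T`. -/
theorem l51_avg [Fintype (H ⧸ Subgroup.center H)] (hres : π.RestrictsTo χ)
    (hirr : π.IsIrreducible) (T : π.carrier →ₗ[ℂ] π.carrier) :
    ∃ μ : ℂ,
      (∑ c : H ⧸ Subgroup.center H,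
        π.ρ (Quotient.out c) * T * π.ρ (Quotient.out c)⁻¹) = μ • 1 ∧
      μ * (Module.finrank ℂ π.carrier : ℂ) =
        (Fintype.card (H ⧸ Subgroup.center H) : ℂ) * trace ℂ π.carrier T := by
  haveI : Nontrivial π.carrier := by
    rcases subsingleton_or_nontrivial π.carrier with hs | hn
    · exact absurd ((Subsingleton.elim _ _)) hirr.1
    · exact hn
  set C : Module.End ℂ π.carrier := ∑ c : H ⧸ Subgroup.center H,
      π.ρ (Quotient.out c) * T * π.ρ (Quotient.out c)⁻¹ with hCdef
  have hcomm : ∀ g : H, π.ρ g * C = C * π.ρ g := by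
    intro g
    have key : π.ρ g * C * π.ρ g⁻¹ = C := by
      rw [hCdef, Finset.mul_sum, Finset.sum_mul]
      calc (∑ c : H ⧸ Subgroup.center H,
              π.ρ g * (π.ρ (Quotient.out c) * T * π.ρ (Quotient.out c)⁻¹) * π.ρ g⁻¹)
          = ∑ c : H ⧸ Subgroup.center H,
              π.ρ (Quotient.out ((g : H ⧸ Subgroup.center H) * c)) * T *
                π.ρ (Quotient.out ((g : H ⧸ Subgroup.center H) * c))⁻¹ := by
            refine Finset.sum_congr rfl fun c _ => ?_
            have h1 : π.ρ g * (π.ρ (Quotient.out c) * T * π.ρ (Quotient.out c)⁻¹) * π.ρ g⁻¹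
                = π.ρ (g * Quotient.out c) * T * π.ρ (g * Quotient.out c)⁻¹ := by
              rw [map_mul, mul_inv_rev, map_mul]
              simp only [mul_assoc]
            rw [h1]
            refine l51_conj_coset χ π hres T ?_
            rw [QuotientGroup.mk_mul, QuotientGroup.out_eq', QuotientGroup.out_eq']
        _ = C := by
            rw [hCdef]
            exact Fintype.sum_equiv (Equiv.mulLeft (g : H ⧸ Subgroup.center H)) _ _
              (fun c => rfl)
    calc π.ρ g * C = π.ρ g * C * (π.ρ g⁻¹ * π.ρ g) := by rw [l51_rho_inv_mul, mul_one]
      _ = (π.ρ g * C * π.ρ g⁻¹) * π.ρ g := by simp only [mul_assoc]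
      _ = C * π.ρ g := by rw [key]
  obtain ⟨μ, hμ⟩ := Module.End.exists_eigenvalue C
  have heig : Module.End.eigenspace C μ = ⊤ := by
    have hinv : ∀ g : H, ∀ x ∈ Module.End.eigenspace C μ, π.ρ g x ∈ Module.End.eigenspace C μ := by
      intro g x hx
      rw [Module.End.mem_eigenspace_iff] at hx ⊢
      have : C (π.ρ g x) = π.ρ g (C x) := by
        have := hcomm g
        calc C (π.ρ g x) = (C * π.ρ g) x := rfl
          _ = (π.ρ g * C) x := by rw [this]
          _ = π.ρ g (C x) := rfl
      rw [this, hx, map_smul]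
    rcases hirr.2 (Module.End.eigenspace C μ) hinv with h | h
    · exact absurd h hμ
    · exact h
  have hCs : C = μ • 1 := by
    apply LinearMap.ext
    intro x
    have hx : x ∈ Module.End.eigenspace C μ := heig ▸ Submodule.mem_top
    rw [Module.End.mem_eigenspace_iff] at hx
    simpa using hx
  refine ⟨μ, hCs, ?_⟩
  have htr := congrArg (trace ℂ π.carrier) hCs
  rw [map_smul, trace_one, smul_eq_mul] at htr
  rw [← htr, hCdef, map_sum]
  simp only [l51_trace_conj π T]
  rw [Finset.sum_const, Finset.card_univ, nsmul_eq_mul]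

end Lemma51Aux

section Lemma51Aux2

open LinearMap

variable {H : Type} [Group H]
variable (χ : Subgroup.center H →* ℂˣ) (π : FinDimRep H)

/-- The character of `π` vanishes off the center. -/
theorem l51_theta_zero (z : H) (hz : z ∈ Subgroup.center H)
    (hcomm : ∀ g h : H, ⁅g, h⁆ ∈ ({1, z} : Set H))
    (hres : π.RestrictsTo χ) (hχ : χ ⟨z, hz⟩ = -1)
    {g : H} (hg : g ∉ Subgroup.center H) : trace ℂ π.carrier (π.ρ g) = 0 := by
  have hg' : ∃ h : H, ¬ (h * g = g * h) := by
    by_contra hcon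
    push_neg at hcon
    exact hg (Subgroup.mem_center_iff.mpr fun h => hcon h)
  obtain ⟨h, hh⟩ := hg'
  have hcz : ⁅h, g⁆ = z := by
    rcases hcomm h g with h1 | h1
    · exact absurd (commutatorElement_eq_one_iff_mul_comm.mp h1) hh
    · exact h1
  have hconj : h * g * h⁻¹ = z * g := by
    rw [← hcz]
    group
  have h1 : trace ℂ π.carrier (π.ρ (h * g * h⁻¹)) = trace ℂ π.carrier (π.ρ g) := by
    have e : π.ρ (h * g * h⁻¹) = π.ρ h * π.ρ g * π.ρ h⁻¹ := by
      rw [map_mul π.ρ, map_mul π.ρ]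
    rw [e]
    exact l51_trace_conj π (π.ρ g) h
  have h2 : trace ℂ π.carrier (π.ρ (z * g)) = - trace ℂ π.carrier (π.ρ g) := by
    rw [show z = ((⟨z, hz⟩ : Subgroup.center H) : H) from rfl,
      l51_rho_central_mul χ π hres ⟨z, hz⟩ g, hχ, map_smul]
    simp
  rw [hconj, h2] at h1
  have h3 : (2 : ℂ) * trace ℂ π.carrier (π.ρ g) = 0 := by linear_combination - h1
  exact (mul_eq_zero.mp h3).resolve_left two_ne_zero

/-- `Φ ∘ Ψ = dim V • id`. -/
theorem l51_phiPsi [Fintype (H ⧸ Subgroup.center H)]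
    (z : H) (hz : z ∈ Subgroup.center H)
    (hcomm : ∀ g h : H, ⁅g, h⁆ ∈ ({1, z} : Set H))
    (hres : π.RestrictsTo χ) (hχ : χ ⟨z, hz⟩ = -1) (f : indSpace H χ) :
    l51phi χ π hres (l51psi χ π f) = (Module.finrank ℂ π.carrier : ℂ) • f := by
  apply Subtype.ext
  funext h
  show trace ℂ π.carrier (π.ρ h * ∑ c : H ⧸ Subgroup.center H,
      (f : H → ℂ) (Quotient.out c)⁻¹ • π.ρ (Quotient.out c))
    = ((Module.finrank ℂ π.carrier : ℂ) • f : indSpace H χ).val h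
  have hterm : ∀ c : H ⧸ Subgroup.center H,
      π.ρ h * ((f : H → ℂ) (Quotient.out c)⁻¹ • π.ρ (Quotient.out c))
        = (f : H → ℂ) (Quotient.out c)⁻¹ • π.ρ (h * Quotient.out c) := by
    intro c
    rw [mul_smul_comm, ← map_mul]
  rw [Finset.mul_sum]
  simp only [hterm]
  rw [map_sum]
  rw [Finset.sum_eq_single ((h⁻¹ : H) : H ⧸ Subgroup.center H)]
  · -- the surviving term
    set g₀ : H := Quotient.out ((h⁻¹ : H) : H ⧸ Subgroup.center H) with hg0
    have hout : (g₀ : H ⧸ Subgroup.center H) = ((h⁻¹ : H) : H ⧸ Subgroup.center H) :=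
      QuotientGroup.out_eq' _
    have hsmem : h * g₀ ∈ Subgroup.center H := by
      have := QuotientGroup.eq.mp hout.symm
      rwa [inv_inv] at this
    set s : Subgroup.center H := ⟨h * g₀, hsmem⟩ with hsdef
    have hg0eq : g₀ = h⁻¹ * (s : H) := by
      show g₀ = h⁻¹ * (h * g₀)
      group
    have hg0inv : g₀⁻¹ = ((s⁻¹ : Subgroup.center H) : H) * h := by
      rw [hg0eq]
      show (h⁻¹ * (h * g₀))⁻¹ = (h * g₀)⁻¹ * h
      group
    have hfval : (f : H → ℂ) g₀⁻¹ = (χ s⁻¹ : ℂ) * (f : H → ℂ) h := by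
      rw [hg0inv]
      exact f.2 s⁻¹ h
    have hrho : π.ρ (h * g₀) = (χ s : ℂ) • 1 := hres s
    rw [map_smul, hfval, hrho, map_smul, trace_one, smul_eq_mul, smul_eq_mul]
    have hu := l51_units_cancel χ s
    push_cast
    show ((χ s⁻¹ : ℂ) * (f : H → ℂ) h) * ((χ s : ℂ) * (Module.finrank ℂ π.carrier : ℂ))
      = (Module.finrank ℂ π.carrier : ℂ) * (f : H → ℂ) h
    calc ((χ s⁻¹ : ℂ) * (f : H → ℂ) h) * ((χ s : ℂ) * (Module.finrank ℂ π.carrier : ℂ))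
        = ((χ s⁻¹ : ℂ) * (χ s : ℂ)) * ((f : H → ℂ) h * (Module.finrank ℂ π.carrier : ℂ)) := by
          ring
      _ = (Module.finrank ℂ π.carrier : ℂ) * (f : H → ℂ) h := by rw [hu]; ring
  · -- all other terms vanish
    intro b _ hb
    have hnc : h * Quotient.out b ∉ Subgroup.center H := by
      intro hmem
      apply hb
      have : ((h⁻¹ : H) : H ⧸ Subgroup.center H) = ((Quotient.out b : H) : H ⧸ Subgroup.center H) := by
        apply QuotientGroup.eq.mpr
        rwa [inv_inv]
      rw [QuotientGroup.out_eq'] at this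
      exact this.symm
    rw [map_smul, l51_theta_zero χ π z hz hcomm hres hχ hnc, smul_zero]
  · intro hmem
    exact absurd (Finset.mem_univ _) hmem

theorem l51_trace_smulRight {V : Type} [AddCommGroup V] [Module ℂ V] [FiniteDimensional ℂ V]
    (l : V →ₗ[ℂ] ℂ) (w : V) : trace ℂ V (smulRight l w) = l w := by
  have h : smulRight l w = dualTensorHom ℂ V V (l ⊗ₜ w) := by
    apply LinearMap.ext
    intro x
    simp
  rw [h, trace_eq_contract_apply, contractLeft_apply]

/-- Decomposition of an endomorphism into rank-one pieces along a basis. -/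
theorem l51_rank_one_decomp {V : Type} [AddCommGroup V] [Module ℂ V] [FiniteDimensional ℂ V]
    {ι : Type} [Fintype ι] (b : Module.Basis ι ℂ V) (S : V →ₗ[ℂ] V) :
    S = ∑ i : ι, smulRight (b.coord i) (S (b i)) := by
  apply LinearMap.ext
  intro u
  conv_lhs => rw [← b.sum_repr u]
  rw [map_sum, LinearMap.sum_apply]
  refine Finset.sum_congr rfl fun i _ => ?_
  rw [map_smul, smulRight_apply, Module.Basis.coord_apply]

/-- `dim V • (Ψ ∘ Φ) = |H/Z| • id`. -/
theorem l51_psiPhi [Fintype (H ⧸ Subgroup.center H)] (hres : π.RestrictsTo χ)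
    (hirr : π.IsIrreducible) (S : π.carrier →ₗ[ℂ] π.carrier) :
    (Module.finrank ℂ π.carrier : ℂ) • l51psi χ π (l51phi χ π hres S)
      = (Fintype.card (H ⧸ Subgroup.center H) : ℂ) • S := by
  have rank1 : ∀ (l : π.carrier →ₗ[ℂ] ℂ) (v : π.carrier),
      (Module.finrank ℂ π.carrier : ℂ) • l51psi χ π (l51phi χ π hres (smulRight l v))
        = (Fintype.card (H ⧸ Subgroup.center H) : ℂ) • smulRight l v := by
    intro l v
    apply LinearMap.ext
    intro u
    obtain ⟨μ, hμ1, hμ2⟩ := l51_avg χ π hres hirr (smulRight l u)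
    have hphival : ∀ g : H, (l51phi χ π hres (smulRight l v) : H → ℂ) g⁻¹
        = l (π.ρ g⁻¹ v) := by
      intro g
      show trace ℂ π.carrier (π.ρ g⁻¹ * smulRight l v) = l (π.ρ g⁻¹ v)
      have : π.ρ g⁻¹ * smulRight l v = smulRight l (π.ρ g⁻¹ v) := by
        apply LinearMap.ext
        intro x
        show π.ρ g⁻¹ (l x • v) = l x • π.ρ g⁻¹ v
        rw [map_smul]
      rw [this, l51_trace_smulRight]
    have hsum : l51psi χ π (l51phi χ π hres (smulRight l v)) u
        = (∑ c : H ⧸ Subgroup.center H,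
            π.ρ (Quotient.out c) * smulRight l u * π.ρ (Quotient.out c)⁻¹) v := by
      show (∑ c : H ⧸ Subgroup.center H,
          (l51phi χ π hres (smulRight l v) : H → ℂ) (Quotient.out c)⁻¹
            • π.ρ (Quotient.out c)) u = _
      rw [LinearMap.sum_apply, LinearMap.sum_apply]
      refine Finset.sum_congr rfl fun c _ => ?_
      rw [LinearMap.smul_apply, hphival]
      show l (π.ρ (Quotient.out c)⁻¹ v) • π.ρ (Quotient.out c) u
        = π.ρ (Quotient.out c) (smulRight l u (π.ρ (Quotient.out c)⁻¹ v))
      rw [smulRight_apply, map_smul]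
    rw [LinearMap.smul_apply, hsum, hμ1]
    show (Module.finrank ℂ π.carrier : ℂ) • (μ • v)
      = ((Fintype.card (H ⧸ Subgroup.center H) : ℂ) • smulRight l v) u
    rw [LinearMap.smul_apply, smulRight_apply, smul_smul, smul_smul]
    congr 1
    rw [mul_comm] at hμ2
    rw [hμ2, l51_trace_smulRight]
  set b := Module.finBasis ℂ π.carrier with hb
  have hdecomp := l51_rank_one_decomp b S
  rw [hdecomp, map_sum, map_sum, Finset.smul_sum, Finset.smul_sum]
  exact Finset.sum_congr rfl fun i _ => rank1 (b.coord i) (S (b i))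

/-- `Φ` intertwines left multiplication by `π g` with the induced action. -/
theorem l51_equivariant (hres : π.RestrictsTo χ) (g : H) (S : π.carrier →ₗ[ℂ] π.carrier) :
    l51phi χ π hres (π.ρ g * S) = indRep H χ g (l51phi χ π hres S) := by
  apply Subtype.ext
  funext h
  show trace ℂ π.carrier (π.ρ h * (π.ρ g * S))
    = trace ℂ π.carrier (π.ρ (h * g) * S)
  rw [map_mul π.ρ h g, mul_assoc]

end Lemma51Aux2

/-- The dimension and induction part of **Lemma 5.1** of the paper: if
`[H : Z(H)] = n²` and `χ` is a genuine character of `Z(H)` with associated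
irreducible representation `π = π(χ)`, then `dim π(χ) = n` and
`Ind_{Z(H)}^{H} χ ≅ n · π(χ)`. -/
theorem dim_and_induced_decomposition
    (H : Type) [Group H] (z : H) (hz : z ∈ Subgroup.center H)
    (hz2 : orderOf z = 2)
    (hcomm : ∀ g h : H, ⁅g, h⁆ ∈ ({1, z} : Set H))
    (hfin : (Subgroup.center H).FiniteIndex)
    (n : ℕ) (hn : 0 < n) (hidx : (Subgroup.center H).index = n ^ 2)
    (χ : Subgroup.center H →* ℂˣ) (hχ : χ ⟨z, hz⟩ = -1)
    (π : FinDimRep H) (hirr : π.IsIrreducible) (hres : π.RestrictsTo χ) :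
    Module.finrank ℂ π.carrier = n ∧
      RepIso (indRep H χ) (copiesRep H n π.ρ) := by
  classical
  haveI := hfin
  haveI : Fintype (H ⧸ Subgroup.center H) := Fintype.ofFinite _
  haveI : Nontrivial π.carrier := by
    rcases subsingleton_or_nontrivial π.carrier with hs | hnt
    · exact absurd (Subsingleton.elim _ _) hirr.1
    · exact hnt
  have hdpos : 0 < Module.finrank ℂ π.carrier := Module.finrank_pos
  have hdC : (Module.finrank ℂ π.carrier : ℂ) ≠ 0 := Nat.cast_ne_zero.mpr hdpos.ne'
  have hcard : Fintype.card (H ⧸ Subgroup.center H) = n ^ 2 := by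
    rw [← Nat.card_eq_fintype_card, ← Subgroup.index_eq_card]
    exact hidx
  -- Φ 1 ≠ 0
  have hphi1 : l51phi χ π hres 1 ≠ 0 := by
    intro h0
    have h1 := congrFun (congrArg Subtype.val h0) 1
    have h2 : (l51phi χ π hres 1 : H → ℂ) 1
        = LinearMap.trace ℂ π.carrier (π.ρ 1 * 1) := rfl
    rw [h2, mul_one, map_one, LinearMap.trace_one] at h1
    exact hdC h1
  -- d = n
  have key := l51_psiPhi χ π hres hirr 1
  have key2 : (Module.finrank ℂ π.carrier : ℂ) •
      l51phi χ π hres (l51psi χ π (l51phi χ π hres 1))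
      = (Fintype.card (H ⧸ Subgroup.center H) : ℂ) • l51phi χ π hres 1 := by
    rw [← map_smul, key, map_smul]
  rw [l51_phiPsi χ π z hz hcomm hres hχ, smul_smul] at key2
  have hdd : (Module.finrank ℂ π.carrier : ℂ) * (Module.finrank ℂ π.carrier : ℂ)
      = (Fintype.card (H ⧸ Subgroup.center H) : ℂ) := smul_left_injective ℂ hphi1 key2
  have hddn : Module.finrank ℂ π.carrier * Module.finrank ℂ π.carrier = n ^ 2 := by
    have : (Module.finrank ℂ π.carrier * Module.finrank ℂ π.carrier : ℂ)
        = ((n ^ 2 : ℕ) : ℂ) := by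
      push_cast
      push_cast at hdd
      rw [hdd, hcard]
      push_cast
      ring
    exact_mod_cast this
  have hdn : Module.finrank ℂ π.carrier = n := by
    have h2 : Module.finrank ℂ π.carrier ^ 2 = n ^ 2 := by rw [pow_two]; exact hddn
    exact Nat.pow_left_injective (by norm_num) h2
  refine ⟨hdn, ?_⟩
  -- Ψ ∘ Φ = d • id
  have hpsiphi : ∀ S : π.carrier →ₗ[ℂ] π.carrier,
      l51psi χ π (l51phi χ π hres S) = (Module.finrank ℂ π.carrier : ℂ) • S := by
    intro S
    apply smul_right_injective _ hdC
    show (Module.finrank ℂ π.carrier : ℂ) • l51psi χ π (l51phi χ π hres S)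
      = (Module.finrank ℂ π.carrier : ℂ) • ((Module.finrank ℂ π.carrier : ℂ) • S)
    rw [l51_psiPhi χ π hres hirr S]
    rw [smul_smul, ← hdd]
  -- the linear equivalence Φ
  have hdinv : (Module.finrank ℂ π.carrier : ℂ)⁻¹ * (Module.finrank ℂ π.carrier : ℂ) = 1 :=
    inv_mul_cancel₀ hdC
  let Φe : (π.carrier →ₗ[ℂ] π.carrier) ≃ₗ[ℂ] indSpace H χ :=
    LinearEquiv.ofLinear (l51phi χ π hres)
      ((Module.finrank ℂ π.carrier : ℂ)⁻¹ • l51psi χ π)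
      (by
        apply LinearMap.ext
        intro f
        show l51phi χ π hres (((Module.finrank ℂ π.carrier : ℂ)⁻¹ • l51psi χ π) f) = f
        rw [LinearMap.smul_apply, map_smul, l51_phiPsi χ π z hz hcomm hres hχ,
          smul_smul, hdinv, one_smul])
      (by
        apply LinearMap.ext
        intro S
        show ((Module.finrank ℂ π.carrier : ℂ)⁻¹ • l51psi χ π) (l51phi χ π hres S) = S
        rw [LinearMap.smul_apply, hpsiphi, smul_smul, hdinv, one_smul])
  let b : Module.Basis (Fin n) ℂ π.carrier := Module.finBasisOfFinrankEq ℂ π.carrier hdn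
  let M : (π.carrier →ₗ[ℂ] π.carrier) ≃ₗ[ℂ] (Fin n → π.carrier) := (b.constr ℂ).symm
  have hM : ∀ (S : π.carrier →ₗ[ℂ] π.carrier) (i : Fin n), M S i = S (b i) := fun S i => rfl
  refine ⟨Φe.symm.trans M, fun g f => ?_⟩
  have hf : f = Φe (Φe.symm f) := (Φe.apply_symm_apply f).symm
  have hΦ : ∀ S, Φe S = l51phi χ π hres S := fun S => rfl
  have h1 : indRep H χ g f = Φe (π.ρ g * Φe.symm f) := by
    conv_lhs => rw [hf]
    rw [hΦ, hΦ]
    exact (l51_equivariant χ π hres g (Φe.symm f)).symm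
  rw [h1, LinearEquiv.trans_apply, LinearEquiv.trans_apply, LinearEquiv.symm_apply_apply]
  funext i
  rfl
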